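/- arXiv:2304.10385 — 3 statements merged into one kernel-verified Lean document; each statement's English description precedes it below -/
import Mathlib

section
/- Let ψ₀, ψ₁ be unit vectors in a finite-dimensional complex inner product space encoded in registers of dimension 2^n, and consider the swap test: the state (|0⟩⊗ψ₀⊗ψ₁) is evolved by H on the ancilla, a controlled-SWAP of the two registers, and H again on the ancilla. Then the probability of measuring the ancilla in |0⟩ equals 1/2 + (1/2)·|⟨ψ₀|ψ₁⟩|². -/
open Finset

/-- Swap test: for unit state vectors `ψ₀, ψ₁` on a register of dimension `2^n`,
the amplitude of the full state after `H`, controlled-SWAP, `H` on the component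
where the ancilla is `|0⟩` is `(1/2)(ψ₀ j * ψ₁ l + ψ₀ l * ψ₁ j)` at `(j, l)`,
and the probability of measuring the ancilla in `|0⟩` equals
`1/2 + (1/2)|⟨ψ₀|ψ₁⟩|²`. -/
theorem swap_test_probability
    (n : ℕ) (ψ₀ ψ₁ : Fin (2 ^ n) → ℂ)
    (h₀ : ∑ j, ‖ψ₀ j‖ ^ 2 = 1) (h₁ : ∑ j, ‖ψ₁ j‖ ^ 2 = 1) :
    ∑ j, ∑ l, ‖(1 / 2 : ℂ) * (ψ₀ j * ψ₁ l + ψ₀ l * ψ₁ j)‖ ^ 2 =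
      1 / 2 + 1 / 2 * ‖∑ j, (starRingEnd ℂ) (ψ₀ j) * ψ₁ j‖ ^ 2 := by
  have hns : ∀ z : ℂ, ‖z‖ ^ 2 = Complex.normSq z := fun z => by
    rw [← Complex.sq_norm]
  simp only [hns] at h₀ h₁ ⊢
  set S := ∑ j, (starRingEnd ℂ) (ψ₀ j) * ψ₁ j with hS
  have h12 : Complex.normSq (1/2 : ℂ) = 1/4 := by
    simp [Complex.normSq_apply]; norm_num
  have expand : ∀ j l, Complex.normSq ((1 / 2 : ℂ) * (ψ₀ j * ψ₁ l + ψ₀ l * ψ₁ j)) =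
      (1/4) * (Complex.normSq (ψ₀ j) * Complex.normSq (ψ₁ l)
        + Complex.normSq (ψ₀ l) * Complex.normSq (ψ₁ j)
        + 2 * ((ψ₀ j * ψ₁ l) * (starRingEnd ℂ) (ψ₀ l * ψ₁ j)).re) := by
    intro j l
    rw [Complex.normSq_mul, Complex.normSq_add, Complex.normSq_mul,
      Complex.normSq_mul, h12]
  simp only [expand]
  have h2 : ∑ j, ∑ l, ((ψ₀ j * ψ₁ l) * (starRingEnd ℂ) (ψ₀ l * ψ₁ j)).re
      = Complex.normSq S := by
    have key : ∑ j, ∑ l, (ψ₀ j * ψ₁ l) * (starRingEnd ℂ) (ψ₀ l * ψ₁ j)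
        = (starRingEnd ℂ) S * S := by
      rw [hS, map_sum, Finset.sum_mul]
      refine Finset.sum_congr rfl fun j _ => ?_
      rw [Finset.mul_sum]
      refine Finset.sum_congr rfl fun l _ => ?_
      simp only [map_mul, Complex.conj_conj]
      ring
    calc ∑ j, ∑ l, ((ψ₀ j * ψ₁ l) * (starRingEnd ℂ) (ψ₀ l * ψ₁ j)).re
        = (∑ j, ∑ l, (ψ₀ j * ψ₁ l) * (starRingEnd ℂ) (ψ₀ l * ψ₁ j)).re := by
          simp [Complex.re_sum]
      _ = ((starRingEnd ℂ) S * S).re := by rw [key]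
      _ = Complex.normSq S := by rw [mul_comm, Complex.mul_conj]; simp
  simp only [Finset.mul_sum, Finset.sum_add_distrib, ← Finset.sum_mul, ← Finset.mul_sum]
  rw [h₀, h₁, h2]
  ring
end

section
/- Let D⁰, D¹ : Fin N → ℝ be unit vectors and suppose they are encoded in BOE states |ψ̃⁰⟩ = ∑_j D⁰_j |j⟩|φ⁰_j⟩ and |ψ̃¹⟩ = ∑_j D¹_j |j⟩|φ¹_j⟩ where {|φ⁰_j⟩}_j and {|φ¹_j⟩}_j are each orthonormal families in the auxiliary space. Applying the swap test between the primary registers only, the ancilla is measured in |0⟩ with probability 1/2 + (1/2)·∑_j (D⁰_j)²·(D¹_j)². -/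
open Finset

/-- Swap test in the Bidirectional Orthogonal Encoding (Prop. `swap-bidir`,
part 1): for unit vectors `D⁰, D¹` encoded as `∑ j D_j |j⟩|φ_j⟩` with
orthonormal auxiliary families, swapping only the primary registers gives
ancilla outcome `|0⟩` with probability `1/2 + (1/2) ∑_j (D⁰_j)² (D¹_j)²`. -/
theorem boe_swap_test_probability
    (N M : ℕ) (D0 D1 : Fin N → ℝ)
    (hD0 : ∑ j, (D0 j) ^ 2 = 1) (hD1 : ∑ j, (D1 j) ^ 2 = 1)
    (φ0 φ1 : Fin N → Fin M → ℂ)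
    (horth0 : ∀ i j, ∑ x, (starRingEnd ℂ) (φ0 i x) * φ0 j x =
      if i = j then 1 else 0)
    (horth1 : ∀ i j, ∑ x, (starRingEnd ℂ) (φ1 i x) * φ1 j x =
      if i = j then 1 else 0) :
    ∑ j, ∑ x, ∑ l, ∑ y,
      ‖(1 / 2 : ℂ) * ((D0 j : ℂ) * φ0 j x * (D1 l : ℂ) * φ1 l y
        + (D0 l : ℂ) * φ0 l x * (D1 j : ℂ) * φ1 j y)‖ ^ 2 =
      1 / 2 + 1 / 2 * ∑ j, (D0 j) ^ 2 * (D1 j) ^ 2 := by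
  have o0 : ∀ i k : Fin N, ∑ x, φ0 i x * (starRingEnd ℂ) (φ0 k x) =
      if i = k then 1 else 0 := by
    intro i k
    have h := congrArg (starRingEnd ℂ) (horth0 i k)
    simpa [map_sum, map_mul, mul_comm, apply_ite] using h
  have o1 : ∀ i k : Fin N, ∑ x, φ1 i x * (starRingEnd ℂ) (φ1 k x) =
      if i = k then 1 else 0 := by
    intro i k
    have h := congrArg (starRingEnd ℂ) (horth1 i k)
    simpa [map_sum, map_mul, mul_comm, apply_ite] using h
  have inner : ∀ j l : Fin N,
      (∑ x, ∑ y, ((1 / 2 : ℂ) * ((D0 j : ℂ) * φ0 j x * (D1 l : ℂ) * φ1 l y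
        + (D0 l : ℂ) * φ0 l x * (D1 j : ℂ) * φ1 j y)) *
        (starRingEnd ℂ) ((1 / 2 : ℂ) * ((D0 j : ℂ) * φ0 j x * (D1 l : ℂ) * φ1 l y
        + (D0 l : ℂ) * φ0 l x * (D1 j : ℂ) * φ1 j y))) =
      (1/4 : ℂ) * ((D0 j : ℂ)^2 * (D1 l : ℂ)^2 + (D0 l : ℂ)^2 * (D1 j : ℂ)^2
        + if j = l then 2 * (D0 j : ℂ)^2 * (D1 j : ℂ)^2 else 0) := by
    intro j l
    have e : ∀ x y : Fin M,
        ((1 / 2 : ℂ) * ((D0 j : ℂ) * φ0 j x * (D1 l : ℂ) * φ1 l y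
          + (D0 l : ℂ) * φ0 l x * (D1 j : ℂ) * φ1 j y)) *
        (starRingEnd ℂ) ((1 / 2 : ℂ) * ((D0 j : ℂ) * φ0 j x * (D1 l : ℂ) * φ1 l y
          + (D0 l : ℂ) * φ0 l x * (D1 j : ℂ) * φ1 j y)) =
        (1/4 : ℂ) * (
          ((D0 j : ℂ) * (D0 j : ℂ)) * ((D1 l : ℂ) * (D1 l : ℂ)) *
            ((φ0 j x * (starRingEnd ℂ) (φ0 j x)) * (φ1 l y * (starRingEnd ℂ) (φ1 l y)))
          + ((D0 j : ℂ) * (D0 l : ℂ)) * ((D1 l : ℂ) * (D1 j : ℂ)) *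
            ((φ0 j x * (starRingEnd ℂ) (φ0 l x)) * (φ1 l y * (starRingEnd ℂ) (φ1 j y)))
          + ((D0 l : ℂ) * (D0 j : ℂ)) * ((D1 j : ℂ) * (D1 l : ℂ)) *
            ((φ0 l x * (starRingEnd ℂ) (φ0 j x)) * (φ1 j y * (starRingEnd ℂ) (φ1 l y)))
          + ((D0 l : ℂ) * (D0 l : ℂ)) * ((D1 j : ℂ) * (D1 j : ℂ)) *
            ((φ0 l x * (starRingEnd ℂ) (φ0 l x)) * (φ1 j y * (starRingEnd ℂ) (φ1 j y)))) := by
      intro x y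
      simp only [map_mul, map_add, Complex.conj_ofReal, map_div₀, map_one, map_ofNat]
      ring
    rw [Finset.sum_congr rfl fun x _ => Finset.sum_congr rfl fun y _ => e x y]
    simp only [Finset.sum_add_distrib, ← Finset.mul_sum, ← Finset.sum_mul, ← Finset.mul_sum]
    rw [o0 j j, o0 j l, o0 l j, o0 l l, o1 l l, o1 l j, o1 j l, o1 j j]
    by_cases h : j = l
    · subst h; simp; ring
    · simp [h, Ne.symm h]; ring
  have c0 : ∑ j, ((D0 j : ℂ)) ^ 2 = 1 := by exact_mod_cast congrArg (Complex.ofReal) hD0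
  have c1 : ∑ j, ((D1 j : ℂ)) ^ 2 = 1 := by exact_mod_cast congrArg (Complex.ofReal) hD1
  have swap : ∀ j : Fin N, (∑ x : Fin M, ∑ l : Fin N, ∑ y : Fin M,
      ‖(1 / 2 : ℂ) * ((D0 j : ℂ) * φ0 j x * (D1 l : ℂ) * φ1 l y
        + (D0 l : ℂ) * φ0 l x * (D1 j : ℂ) * φ1 j y)‖ ^ 2) =
      ∑ l : Fin N, ∑ x : Fin M, ∑ y : Fin M,
      ‖(1 / 2 : ℂ) * ((D0 j : ℂ) * φ0 j x * (D1 l : ℂ) * φ1 l y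
        + (D0 l : ℂ) * φ0 l x * (D1 j : ℂ) * φ1 j y)‖ ^ 2 :=
    fun j => Finset.sum_comm ..
  rw [Finset.sum_congr rfl fun j _ => swap j, ← Complex.ofReal_inj]
  have hz : ∀ z : ℂ, ((‖z‖ ^ 2 : ℝ) : ℂ) = z * (starRingEnd ℂ) z := by
    intro z
    rw [Complex.mul_conj]
    norm_cast
    rw [Complex.sq_norm]
  simp only [Complex.ofReal_sum, hz, inner]
  simp only [mul_add, Finset.sum_add_distrib, ← Finset.mul_sum, ← Finset.sum_mul,
    ← Finset.mul_sum, Finset.sum_ite_eq, Finset.mem_univ, if_true]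
  rw [c0, c1]
  push_cast
  have h2 : ∑ i : Fin N, (2 : ℂ) * (D0 i : ℂ) ^ 2 * (D1 i : ℂ) ^ 2 =
      2 * ∑ i : Fin N, (D0 i : ℂ) ^ 2 * (D1 i : ℂ) ^ 2 := by
    rw [Finset.mul_sum]
    exact Finset.sum_congr rfl fun i _ => by ring
  rw [h2]
  ring
end

section
/- Let T̃ : Fin N → ℝ be a unit vector and k ≥ 1, and suppose the state ∑_j T̃_j |j⟩|φ_j⟩ with orthonormal {|φ_j⟩} is given. Applying the QHP (controlled-NOT elementwise product with post-selection on |0…0⟩ in a second primary register) k−1 times to k copies of the primary register of this state yields, conditioned on success, the state ã_k·∑_j (T̃_j)^k |j⟩|φ_j⟩ where ã_k = (∑_j (T̃_j)^(2k))^(−1/2), and the orthonormality of the auxiliary family is preserved; the overall success probability is ã_k^(−2) for k = 2 (single QHP). -/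
open Finset

/-- QHP on a BOE state (Eq. `psiTpower-bidir`, case `k = 2`): for a unit
vector `T̃` indexed by `n`-bit strings and a BOE state `∑_j T̃_j |j⟩|φ_j⟩`
with orthonormal auxiliaries, the transversal-CNOT QHP `|j⟩|l⟩ ↦ |j⟩|l ⊕ j⟩`
applied to two copies, post-selected on `|0…0⟩` in the second primary
register, leaves the unnormalized amplitude `T̃_j² φ_j(x)`; the success
probability is `ã₂⁻²`, the conditioned state is `ã₂ ∑_j T̃_j² |j⟩|φ_j⟩`
(a unit vector), and the orthonormality of the auxiliary family is
preserved. -/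
theorem boe_qhp_square
    (n M : ℕ) (T : (Fin n → ZMod 2) → ℝ) (hT : ∑ j, (T j) ^ 2 = 1)
    (φ : (Fin n → ZMod 2) → Fin M → ℂ)
    (horth : ∀ i j, ∑ x, (starRingEnd ℂ) (φ i x) * φ j x =
      if i = j then 1 else 0)
    (a2 : ℝ) (ha2 : a2 = (∑ j, (T j) ^ (2 * 2)) ^ (-(1 / 2 : ℝ)))
    -- `ψ` is the amplitude remaining after the CNOTs `|j⟩|l⟩ ↦ |j⟩|l + j⟩`
    -- and projection of the second primary register onto `0`:
    (ψ : (Fin n → ZMod 2) → Fin M → ℂ)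
    (hψ : ∀ j x, ψ j x = (T j : ℂ) * φ j x * (T (0 - j) : ℂ)) :
    (∀ j x, ψ j x = ((T j ^ 2 : ℝ) : ℂ) * φ j x) ∧
    (∑ j, ∑ x, ‖ψ j x‖ ^ 2 = (a2 ^ 2)⁻¹) ∧
    (∑ j, ∑ x, ‖((a2 : ℝ) : ℂ) * ψ j x‖ ^ 2 = 1) ∧
    (∀ i j, ∑ x, (starRingEnd ℂ) (φ i x) * φ j x = if i = j then 1 else 0) := by
  have hzero : ∀ j : Fin n → ZMod 2, (0 : Fin n → ZMod 2) - j = j := by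
    intro j; funext i
    simp [Pi.sub_apply, sub_eq_add_neg, CharTwo.neg_eq]
  have h1 : ∀ j x, ψ j x = ((T j ^ 2 : ℝ) : ℂ) * φ j x := by
    intro j x
    rw [hψ j x, hzero j]
    push_cast
    ring
  -- norm of auxiliary states
  have hφnorm : ∀ j, ∑ x, ‖φ j x‖ ^ 2 = 1 := by
    intro j
    have := horth j j
    rw [if_pos rfl] at this
    have h2 : ∑ x, (starRingEnd ℂ) (φ j x) * φ j x
        = ((∑ x, ‖φ j x‖ ^ 2 : ℝ) : ℂ) := by
      push_cast
      refine Finset.sum_congr rfl fun x _ => ?_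
      rw [mul_comm, Complex.mul_conj, Complex.normSq_eq_norm_sq]
      simp
    rw [h2] at this
    exact_mod_cast this
  set S : ℝ := ∑ j, (T j) ^ (2 * 2) with hS
  have hsum : ∑ j, ∑ x, ‖ψ j x‖ ^ 2 = S := by
    refine Finset.sum_congr rfl fun j _ => ?_
    have : ∑ x, ‖ψ j x‖ ^ 2 = (T j ^ 2) ^ 2 * ∑ x, ‖φ j x‖ ^ 2 := by
      rw [Finset.mul_sum]
      refine Finset.sum_congr rfl fun x _ => ?_
      rw [h1 j x, norm_mul, mul_pow, Complex.norm_real, Real.norm_eq_abs,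
        sq_abs]
    rw [this, hφnorm j, mul_one, ← pow_mul]
  have hSnonneg : 0 ≤ S := Finset.sum_nonneg fun j _ => by rw [pow_mul]; positivity
  have hSpos : 0 < S := by
    rcases lt_or_eq_of_le hSnonneg with h | h
    · exact h
    · exfalso
      have hall : ∀ j ∈ Finset.univ, (T j) ^ (2 * 2) = 0 := by
        intro j _
        have := (Finset.sum_eq_zero_iff_of_nonneg
          (fun j _ => by rw [pow_mul]; positivity)).mp h.symm
        exact this j (Finset.mem_univ j)
      have : ∑ j, (T j) ^ 2 = 0 := by
        refine Finset.sum_eq_zero fun j _ => ?_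
        have := hall j (Finset.mem_univ j)
        have hTj : T j = 0 := by
          have := pow_eq_zero_iff (n := 2 * 2) (by norm_num) |>.mp this
          exact this
        simp [hTj]
      rw [hT] at this; norm_num at this
  have ha2sq : a2 ^ 2 = S⁻¹ := by
    rw [ha2, ← Real.rpow_natCast (S ^ (-(1 / 2 : ℝ))) 2, ← Real.rpow_mul hSnonneg]
    norm_num
    exact Real.rpow_neg_one S
  refine ⟨h1, ?_, ?_, horth⟩
  · rw [hsum, ha2sq, inv_inv]
  · have : ∑ j, ∑ x, ‖((a2 : ℝ) : ℂ) * ψ j x‖ ^ 2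
        = a2 ^ 2 * ∑ j, ∑ x, ‖ψ j x‖ ^ 2 := by
      rw [Finset.mul_sum]
      refine Finset.sum_congr rfl fun j _ => ?_
      rw [Finset.mul_sum]
      refine Finset.sum_congr rfl fun x _ => ?_
      rw [norm_mul, mul_pow, Complex.norm_real, Real.norm_eq_abs, sq_abs]
    rw [this, hsum, ha2sq, inv_mul_cancel₀ (ne_of_gt hSpos)]
end
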